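/- For any finite rooted plane tree T, (1/2) · max_{v ∈ T} S(v) ≤ wid(T) ≤ max_{v ∈ T} S(v), where wid(T) is the width of T (the maximum number of nodes at any fixed depth) and S(v) is the breadth-first queue length just before v is explored. -/

import Mathlib

inductive PlaneTree : Type
  | node : List PlaneTree → PlaneTree

namespace PlaneTree

def children : PlaneTree → List PlaneTree
  | node ts => ts

mutual
  def height : PlaneTree → ℕ
    | node ts => heightList ts
  def heightList : List PlaneTree → ℕ
    | [] => 0
    | t :: ts => max (height t + 1) (heightList ts)
end

mutual
  def size : PlaneTree → ℕ
    | node ts => 1 + sizeList ts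
  def sizeList : List PlaneTree → ℕ
    | [] => 0
    | t :: ts => size t + sizeList ts
end

def level : ℕ → PlaneTree → List PlaneTree
  | 0, t => [t]
  | n + 1, t => (children t).flatMap (level n)

def bfsList (t : PlaneTree) : List PlaneTree :=
  (List.range (height t + 1)).flatMap (fun n => level n t)

def S (t : PlaneTree) (i : ℕ) : ℤ :=
  1 + ∑ j ∈ Finset.range i, ((((bfsList t).getD j (node [])).children.length : ℤ) - 1)

def width (t : PlaneTree) : ℕ :=
  (Finset.range (height t + 1)).sup (fun n => (level n t).length)

end PlaneTree

namespace PlaneTree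

/-- The maximum breadth-first queue length over all nodes of the tree. -/
def maxS (t : PlaneTree) : ℤ :=
  ((List.range (bfsList t).length).map (S t)).foldr max 1

end PlaneTree

namespace PlaneTree

lemma level_succ (k : ℕ) : ∀ t, level (k+1) t = (level k t).flatMap children := by
  induction k with
  | zero => intro t; simp [level]
  | succ k ih =>
    intro t
    show (children t).flatMap (level (k+1)) = ((children t).flatMap (level k)).flatMap children
    rw [List.flatMap_assoc]
    exact List.flatMap_congr (fun c _ => ih c)

lemma height_lt_of_mem {c : PlaneTree} {ts : List PlaneTree} (h : c ∈ ts) :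
    height c + 1 ≤ heightList ts := by
  induction ts with
  | nil => cases h
  | cons a ts ih =>
    simp only [heightList]
    rcases List.mem_cons.1 h with rfl | h
    · exact le_max_left _ _
    · exact le_trans (ih h) (le_max_right _ _)

lemma exists_height {ts : List PlaneTree} (h : heightList ts ≠ 0) :
    ∃ c ∈ ts, heightList ts = height c + 1 := by
  induction ts with
  | nil => simp [heightList] at h
  | cons a ts ih =>
    simp only [heightList] at h ⊢
    rcases le_or_gt (heightList ts) (height a + 1) with h1 | h1
    · exact ⟨a, List.mem_cons_self, by omega⟩
    · obtain ⟨c, hc, hc2⟩ := ih (by omega)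
      exact ⟨c, List.mem_cons_of_mem _ hc, by omega⟩

lemma level_eq_nil : ∀ (k : ℕ) (t : PlaneTree), height t < k → level k t = []
  | 0, t, h => by omega
  | k+1, t, h => by
    show (children t).flatMap (level k) = []
    rw [List.flatMap_eq_nil_iff]
    intro c hc
    apply level_eq_nil
    cases t with
    | node ts =>
      have := height_lt_of_mem (ts := ts) hc
      simp only [height] at h
      omega

lemma level_ne_nil : ∀ (k : ℕ) (t : PlaneTree), k ≤ height t → level k t ≠ []
  | 0, t, _ => by simp [level]
  | k+1, t, h => by
    show (children t).flatMap (level k) ≠ []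
    cases t with
    | node ts =>
      simp only [height] at h
      obtain ⟨c, hc, hc2⟩ := exists_height (ts := ts) (by omega)
      have h3 : k ≤ height c := by omega
      have := level_ne_nil k c h3
      obtain ⟨x, hx⟩ := List.exists_mem_of_ne_nil _ this
      exact List.ne_nil_of_mem (List.mem_flatMap.2 ⟨c, hc, hx⟩)

def lvlen (t : PlaneTree) (k : ℕ) : ℕ := (level k t).length
def pre (t : PlaneTree) (k : ℕ) : List PlaneTree := (List.range k).flatMap (fun j => level j t)
def off (t : PlaneTree) (k : ℕ) : ℕ := (pre t k).length
def csum (l : List PlaneTree) : ℕ := (l.map (fun v => (children v).length)).sum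

lemma pre_succ (t : PlaneTree) (k : ℕ) : pre t (k+1) = pre t k ++ level k t := by
  simp [pre, List.range_succ]

lemma off_succ (t : PlaneTree) (k : ℕ) : off t (k+1) = off t k + lvlen t k := by
  simp [off, pre_succ, lvlen]

lemma csum_append (a b : List PlaneTree) : csum (a ++ b) = csum a + csum b := by
  simp [csum]

lemma csum_level (t : PlaneTree) (k : ℕ) : csum (level k t) = lvlen t (k+1) := by
  simp [lvlen, level_succ, List.length_flatMap, csum]

lemma csum_pre (t : PlaneTree) (k : ℕ) : csum (pre t k) + 1 = lvlen t k + off t k := by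
  induction k with
  | zero => simp [pre, off, lvlen, level, csum]
  | succ k ih =>
    rw [pre_succ, csum_append, csum_level, off_succ]
    omega

lemma csum_take_le (l : List PlaneTree) (p : ℕ) : csum (l.take p) ≤ csum l := by
  conv_rhs => rw [← List.take_append_drop p l]
  rw [csum_append]; omega

lemma bfs_split (t : PlaneTree) (k : ℕ) (hk : k ≤ height t) :
    bfsList t = pre t k ++ (List.range' k (height t + 1 - k)).flatMap (fun j => level j t) := by
  have h1 : List.range (height t + 1) = List.range' 0 k ++ List.range' k (height t + 1 - k) := by
    rw [List.range_eq_range']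
    have := List.range'_append (s := 0) (m := k) (n := height t + 1 - k) (step := 1)
    simp only [one_mul, zero_add] at this
    rw [this]
    congr 1
    omega
  rw [bfsList, h1, List.flatMap_append, pre, List.range_eq_range']

lemma bfs_take (t : PlaneTree) (k p : ℕ) (hk : k ≤ height t) (hp : p ≤ lvlen t k) :
    (bfsList t).take (off t k + p) = pre t k ++ (level k t).take p := by
  rw [bfs_split t k hk, off, List.take_length_add_append]
  congr 1
  have h2 : height t + 1 - k = (height t - k) + 1 := by omega
  rw [h2, List.range'_succ]
  rw [List.flatMap_cons]
  exact List.take_append_of_le_length hp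

lemma sum_getD (l : List PlaneTree) (g : PlaneTree → ℤ) (d : PlaneTree) :
    ∀ i, i ≤ l.length →
      ∑ j ∈ Finset.range i, g (l.getD j d) = ((l.take i).map g).sum := by
  intro i
  induction i with
  | zero => simp
  | succ i ih =>
    intro hi
    have hi' : i < l.length := by omega
    rw [Finset.sum_range_succ, ih (by omega), List.take_succ]
    have : l[i]? = some l[i] := List.getElem?_eq_getElem hi'
    rw [List.getD_eq_getElem?_getD, this, List.map_append, List.sum_append]
    simp

lemma S_eq (t : PlaneTree) (i : ℕ) (hi : i ≤ (bfsList t).length) :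
    S t i = 1 + (csum ((bfsList t).take i) : ℤ) - i := by
  rw [S, Finset.sum_sub_distrib, Finset.sum_const, Finset.card_range,
    sum_getD (bfsList t) (fun v => ((children v).length : ℤ)) (node []) i hi]
  have : (((bfsList t).take i).map (fun v => ((children v).length : ℤ))).sum
      = (csum ((bfsList t).take i) : ℤ) := by
    rw [csum, Nat.cast_list_sum, List.map_map]
    rfl
  simp only [← this]
  ring_nf

lemma off_mono (t : PlaneTree) : Monotone (off t) :=
  monotone_nat_of_le_succ (fun k => by rw [off_succ]; omega)

lemma length_bfsList (t : PlaneTree) : (bfsList t).length = off t (height t + 1) := rfl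

lemma one_le_lvlen (t : PlaneTree) (k : ℕ) (hk : k ≤ height t) : 1 ≤ lvlen t k :=
  List.length_pos_iff.2 (level_ne_nil k t hk)

lemma lvlen_le_width (t : PlaneTree) (k : ℕ) (hk : k ≤ height t) : lvlen t k ≤ width t :=
  Finset.le_sup (f := fun n => (level n t).length) (Finset.mem_range.2 (by omega))

lemma lvlen_succ_le_width (t : PlaneTree) (k : ℕ) (hk : k ≤ height t) :
    lvlen t (k+1) ≤ width t := by
  rcases eq_or_lt_of_le hk with h | h
  · have h2 : level (k+1) t = [] := level_eq_nil (k+1) t (by omega)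
    simp [lvlen, h2]
  · exact lvlen_le_width t (k+1) (by omega)

lemma exists_decomp (t : PlaneTree) :
    ∀ m i, i < off t m → ∃ k, k < m ∧ off t k ≤ i ∧ i < off t (k+1) := by
  intro m
  induction m with
  | zero => intro i hi; simp [off, pre] at hi
  | succ m ih =>
    intro i hi
    rcases lt_or_ge i (off t m) with h | h
    · obtain ⟨k, h1, h2, h3⟩ := ih i h
      exact ⟨k, by omega, h2, h3⟩
    · exact ⟨m, by omega, h, hi⟩

lemma S_off (t : PlaneTree) (k p : ℕ) (hk : k ≤ height t) (hp : p ≤ lvlen t k) :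
    S t (off t k + p) = (lvlen t k : ℤ) - p + csum ((level k t).take p) := by
  have hlen : off t k + p ≤ (bfsList t).length := by
    rw [length_bfsList]
    have h1 : off t (k+1) ≤ off t (height t + 1) := off_mono t (by omega)
    rw [off_succ] at h1
    omega
  rw [S_eq t _ hlen, bfs_take t k p hk hp, csum_append]
  have := csum_pre t k
  push_cast
  omega

lemma one_le_foldr_max (l : List ℤ) : 1 ≤ l.foldr max 1 := by
  induction l with
  | nil => simp
  | cons a l ih => simp only [List.foldr_cons]; exact le_trans ih (le_max_right _ _)

lemma le_foldr_max {l : List ℤ} {x : ℤ} (h : x ∈ l) : x ≤ l.foldr max 1 := by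
  induction l with
  | nil => cases h
  | cons a l ih =>
    simp only [List.foldr_cons]
    rcases List.mem_cons.1 h with rfl | h
    · exact le_max_left _ _
    · exact le_trans (ih h) (le_max_right _ _)

lemma foldr_max_le {l : List ℤ} {b : ℤ} (h1 : 1 ≤ b) (h : ∀ x ∈ l, x ≤ b) :
    l.foldr max 1 ≤ b := by
  induction l with
  | nil => simpa
  | cons a l ih =>
    simp only [List.foldr_cons]
    exact max_le (h a List.mem_cons_self) (ih (fun x hx => h x (List.mem_cons_of_mem _ hx)))

lemma one_le_width (t : PlaneTree) : 1 ≤ width t := by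
  have := lvlen_le_width t 0 (by omega)
  have h0 : lvlen t 0 = 1 := rfl
  omega

end PlaneTree

open PlaneTree in
theorem stmt3 (t : PlaneTree) :
    maxS t ≤ 2 * (width t : ℤ) ∧ (width t : ℤ) ≤ maxS t := by
  constructor
  · rw [maxS]
    apply foldr_max_le
    · have := one_le_width t
      omega
    · intro x hx
      obtain ⟨i, hi, rfl⟩ := List.mem_map.1 hx
      rw [List.mem_range, length_bfsList] at hi
      obtain ⟨k, hk, h1, h2⟩ := exists_decomp t (height t + 1) i hi
      have hk' : k ≤ height t := by omega
      rw [off_succ] at h2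
      set p := i - off t k with hpdef
      have hip : i = off t k + p := by omega
      have hple : p ≤ lvlen t k := by omega
      rw [hip, S_off t k p hk' hple]
      have hc1 : csum ((level k t).take p) ≤ lvlen t (k+1) := by
        rw [← csum_level]
        exact csum_take_le _ _
      have hb1 : lvlen t k ≤ width t := lvlen_le_width t k hk'
      have hb2 : lvlen t (k+1) ≤ width t := lvlen_succ_le_width t k hk'
      omega
  · obtain ⟨k, hk, hw⟩ := Finset.exists_mem_eq_sup (Finset.range (height t + 1))
      ⟨0, Finset.mem_range.2 (by omega)⟩ (fun n => (level n t).length)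
    rw [Finset.mem_range] at hk
    have hk' : k ≤ height t := by omega
    have hwid : width t = lvlen t k := hw
    have hS : S t (off t k + 0) = (lvlen t k : ℤ) := by
      rw [S_off t k 0 hk' (by omega)]
      simp [csum]
    have hmem : off t k < (bfsList t).length := by
      rw [length_bfsList]
      have h1 : off t (k+1) ≤ off t (height t + 1) := off_mono t (by omega)
      rw [off_succ] at h1
      have := one_le_lvlen t k hk'
      omega
    have : S t (off t k) ∈ (List.range (bfsList t).length).map (S t) :=
      List.mem_map.2 ⟨off t k, List.mem_range.2 hmem, rfl⟩
    have hle : S t (off t k) ≤ maxS t := le_foldr_max this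
    have hS' : S t (off t k) = (lvlen t k : ℤ) := by simpa using hS
    rw [hwid, ← hS']
    exact hle
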